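/- Let μ ∈ ℝ with μ ∉ ℤ. Then for every k ∈ ℤ: [k = 0] = f_μ(k) − sign(μ)·f_{μ−2}(k−1) + (sign(1−μ) − 1)·f_{μ−2⌈μ⌉}(k−⌈μ⌉), where [k = 0] equals 1 if k = 0 and 0 otherwise, and sign(x) = x/|x| for x ≠ 0. -/

import Mathlib

open scoped Classical

/-- `fsig λ k` is the coefficient of `e^{λ-2k}` in the signature character of the
Verma module `M_λ` evaluated at `s = -1`. -/
noncomputable def fsig (lam : ℝ) (k : ℤ) : ℤ :=
  if k < 0 then 0
  else if lam < 0 then (-1) ^ k.toNat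
  else if k ≤ ⌊lam⌋ then 1
  else (-1) ^ (k + ⌈lam⌉).toNat

/-- `signZ x = x/|x|` for `x ≠ 0` (and `0` at `0`), valued in `ℤ`. -/
noncomputable def signZ (x : ℝ) : ℤ :=
  if 0 < x then 1 else if x < 0 then -1 else 0


lemma neg_one_pow_toNat (a : ℤ) (ha : 0 ≤ a) :
    ((-1:ℤ))^a.toNat = if a % 2 = 0 then 1 else -1 := by
  rcases Nat.even_or_odd a.toNat with h | h
  · have h2 : a.toNat % 2 = 0 := Nat.even_iff.mp h
    rw [Even.neg_one_pow h, if_pos (by omega)]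
  · have h2 : a.toNat % 2 = 1 := Nat.odd_iff.mp h
    rw [Odd.neg_one_pow h, if_neg (by omega)]

lemma fsig_neg (lam : ℝ) (hl : lam < 0) (k : ℤ) :
    fsig lam k = if k < 0 then 0 else if k % 2 = 0 then 1 else -1 := by
  unfold fsig
  by_cases hk : k < 0
  · simp [hk]
  · rw [if_neg hk, if_pos hl, neg_one_pow_toNat k (by omega), if_neg hk]

lemma fsig_pos (lam : ℝ) (hl : 0 ≤ lam) (k : ℤ) :
    fsig lam k = if k < 0 then 0 else if k ≤ ⌊lam⌋ then 1
      else if (k + ⌈lam⌉) % 2 = 0 then 1 else -1 := by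
  unfold fsig
  by_cases hk : k < 0
  · simp [hk]
  · rw [if_neg hk, if_neg (not_lt.mpr hl), if_neg hk]
    by_cases hk2 : k ≤ ⌊lam⌋
    · rw [if_pos hk2, if_pos hk2]
    · have hc : 0 ≤ ⌈lam⌉ := Int.ceil_nonneg hl
      rw [if_neg hk2, if_neg hk2, neg_one_pow_toNat _ (by omega)]

lemma signZ_pos {x : ℝ} (h : 0 < x) : signZ x = 1 := by rw [signZ, if_pos h]
lemma signZ_neg {x : ℝ} (h : x < 0) : signZ x = -1 := by
  rw [signZ, if_neg (by linarith), if_pos h]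

/-- the identity
`[k = 0] = f_μ(k) − sign(μ)·f_{μ−2}(k−1) + (sign(1−μ) − 1)·f_{μ−2⌈μ⌉}(k−⌈μ⌉)`. -/
theorem stmt_2 (μ : ℝ) (hμ : ∀ n : ℤ, μ ≠ n) (k : ℤ) :
    (if k = 0 then (1 : ℤ) else 0) =
      fsig μ k - signZ μ * fsig (μ - 2) (k - 1) +
        (signZ (1 - μ) - 1) * fsig (μ - 2 * ⌈μ⌉) (k - ⌈μ⌉) := by
  have hμ0 : μ ≠ 0 := by simpa using hμ 0
  rcases lt_or_gt_of_ne hμ0 with hneg | hpos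
  · -- μ < 0
    rw [signZ_neg hneg, signZ_pos (by linarith : (0:ℝ) < 1 - μ),
      fsig_neg μ hneg, fsig_neg (μ - 2) (by linarith), sub_self, zero_mul, add_zero]
    split_ifs <;> omega
  · -- 0 < μ
    set F : ℤ := ⌊μ⌋ with hF
    have hFle : (F:ℝ) ≤ μ := Int.floor_le μ
    have hFlt : (F:ℝ) < μ := lt_of_le_of_ne hFle (Ne.symm (hμ F))
    have hFlt1 : μ < (F:ℝ) + 1 := Int.lt_floor_add_one μ
    have hF0 : 0 ≤ F := Int.floor_nonneg.mpr (le_of_lt hpos)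
    have hC : ⌈μ⌉ = F + 1 := by
      rw [Int.ceil_eq_iff]
      constructor
      · push_cast; linarith
      · push_cast; linarith
    rw [signZ_pos hpos, hC]
    by_cases hμ1 : μ < 1
    · -- 0 < μ < 1 : F = 0
      have hF00 : F = 0 := by
        have : F < 1 := by exact_mod_cast hFlt.trans hμ1
        omega
      rw [signZ_pos (by linarith : (0:ℝ) < 1 - μ), sub_self, zero_mul, add_zero,
        fsig_pos μ (le_of_lt hpos), fsig_neg (μ - 2) (by linarith), ← hF, hC, hF00]
      split_ifs <;> omega
    · -- 1 < μ
      have h1μ : 1 < μ := by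
        rcases lt_or_ge 1 μ with h | h
        · exact h
        · exact absurd ((Ne.lt_or_gt (hμ 1)).resolve_left (by push_cast; linarith)) (by push_cast; intro hh; linarith)
      have hF1 : 1 ≤ F := by
        have : (0:ℝ) < F + 1 - 1 := by linarith
        have : 0 < F + 1 := by exact_mod_cast (by linarith : (0:ℝ) < (F:ℝ)+1)
        have h2 : (1:ℝ) ≤ F + 1 := by linarith
        -- from μ < F+1 and 1 < μ : 1 < F+1 so F ≥ 1
        have : (1:ℝ) < (F:ℝ) + 1 := by linarith
        exact_mod_cast by
          have : (1:ℤ) < F + 1 := by exact_mod_cast this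
          omega
      rw [signZ_neg (by linarith : (1:ℝ) - μ < 0)]
      have hlast : fsig (μ - 2 * ((F+1 : ℤ) : ℝ)) (k - (F+1)) =
          if k - (F+1) < 0 then 0 else if (k - (F+1)) % 2 = 0 then 1 else -1 := by
        apply fsig_neg
        have : (F:ℝ) + 1 ≤ 2 * ((F:ℝ) + 1) := by push_cast at *; nlinarith [hF0]
        push_cast
        linarith
      have hmid : fsig (μ - 2) (k - 1) =
          if k - 1 < 0 then 0 else if k - 1 ≤ F - 2 then 1
            else if (k + F) % 2 = 0 then 1 else -1 := by
        by_cases hμ2 : μ < 2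
        · -- F = 1
          have hF11 : F = 1 := by
            have : (F:ℝ) < 2 := lt_trans hFlt hμ2
            have h2 : F < 2 := by exact_mod_cast this
            omega
          rw [fsig_neg (μ - 2) (by linarith), hF11]
          split_ifs <;> omega
        · -- μ ≥ 2
          have h2μ : (2:ℝ) ≤ μ := le_of_not_gt hμ2
          rw [fsig_pos (μ - 2) (by linarith)]
          have hfl : ⌊μ - 2⌋ = F - 2 := by
            rw [show (2:ℝ) = ((2:ℤ):ℝ) by norm_num, Int.floor_sub_intCast, hF]
          have hcl : ⌈μ - 2⌉ = F - 1 := by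
            rw [show (2:ℝ) = ((2:ℤ):ℝ) by norm_num, Int.ceil_sub_intCast, hC]
            ring
          rw [hfl, hcl]
          split_ifs <;> omega
      rw [hlast, hmid, fsig_pos μ (le_of_lt hpos), ← hF, hC]
      split_ifs <;> omega
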